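/- Let L ≥ 3. For every perfect matching σ of the hexagonal torus T_L, the sum over all beads b of σ of |I⁺_b(σ)| equals the sum over all beads b of σ of |I⁻_b(σ)| (the total number of single-bead up-jumps available from σ equals the total number of single-bead down-jumps available from σ). -/
import Mathlib


/-!
Dimer coverings (perfect matchings) of the hexagonal torus `T_L`, beads, elementary
moves, and the sets `I⁺_b`, `I⁻_b` of positions available above/below a bead.

Statement-specific material follows the common setup below.

-/

namespace HexDimer

variable (L : ℕ)

/-- Positions `x ∈ (ℤ/Lℤ)²` indexing the white vertices `w_x`, the black vertices `b_x`,
and the horizontal edges (hence the faces / possible bead positions). -/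
abbrev Pos := ZMod L × ZMod L

/-- An edge of the hexagonal torus is encoded by its white endpoint `x` together with a
direction `d : Fin 3`: `d = 0` is the horizontal edge `{w_x, b_x}`, `d = 1` is
`{w_x, b_{x+(1,0)}}`, `d = 2` is `{w_x, b_{x+(0,1)}}`. -/
abbrev Edge := Pos L × Fin 3

/-- The displacement of the black endpoint of an edge in direction `d`. -/
def dvec : Fin 3 → Pos L := ![(0, 0), (1, 0), (0, 1)]

/-- A configuration: a (finite) set of edges. -/
abbrev Config := Finset (Edge L)

/-- `σ` is a perfect matching of the hexagonal torus: every white vertex `w_x` and every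
black vertex `b_x` belongs to exactly one edge of `σ`. -/
def IsPM (σ : Config L) : Prop :=
  (∀ x : Pos L, ∃! d : Fin 3, (x, d) ∈ σ) ∧
  (∀ x : Pos L, ∃! e : Edge L, e ∈ σ ∧ e.1 + dvec L e.2 = x)

/-- The upward shift `(1,-1)` along a column. -/
def u : Pos L := (1, -1)

/-- The set of beads (horizontal dimers) of `σ`, recorded by their positions. -/
def beadPos (σ : Config L) : Finset (Pos L) :=
  (σ.filter (fun e => e.2 = 0)).image Prod.fst

/-- The alternating triple of edges of the face `F_x` containing the lower horizontal
edge `{w_x, b_x}`: the edges `(x,0)`, `(x+(1,-1),2)` and `(x-(0,1),1)`. -/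
def lowTriple (x : Pos L) : Finset (Edge L) :=
  {(x, 0), (x + u L, 2), (x - (0, 1), 1)}

/-- The alternating triple of edges of the face `F_x` containing the upper horizontal
edge `{w_{x+(1,-1)}, b_{x+(1,-1)}}`: the edges `(x,1)`, `(x+(1,-1),0)` and `(x-(0,1),2)`. -/
def highTriple (x : Pos L) : Finset (Edge L) :=
  {(x, 1), (x + u L, 0), (x - (0, 1), 2)}

/-- The elementary up-move at the face `F_x` is allowed: `σ` contains the alternating
triple through the lower horizontal edge of `F_x` (in particular there is a bead at `x`). -/
def CanUp (σ : Config L) (x : Pos L) : Prop := lowTriple L x ⊆ σ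

/-- The configuration after the elementary up-move at `F_x`: the three dimers of the low
triple are rotated onto the high triple; the bead at `x` moves up to `x + (1,-1)`. -/
def upMove (σ : Config L) (x : Pos L) : Config L := (σ \ lowTriple L x) ∪ highTriple L x

/-- The elementary down-move bringing the bead at `x` down to `x - (1,-1)` is allowed. -/
def CanDown (σ : Config L) (x : Pos L) : Prop := highTriple L (x - u L) ⊆ σ

/-- The configuration after the elementary down-move of the bead at `x`. -/
def downMove (σ : Config L) (x : Pos L) : Config L :=
  (σ \ highTriple L (x - u L)) ∪ lowTriple L (x - u L)

/-- `UpPath σ x y σ'` holds if, starting from `σ` with a bead at `x`, a concatenation of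
elementary up-moves (each moving this bead and no other bead) brings the bead to
position `y`, the configuration becoming `σ'`. -/
inductive UpPath : Config L → Pos L → Pos L → Config L → Prop
  | refl (σ : Config L) (x : Pos L) : UpPath σ x x σ
  | step {σ : Config L} {x y : Pos L} {σ' : Config L} :
      CanUp L σ x → UpPath (upMove L σ x) (x + u L) y σ' → UpPath σ x y σ'

/-- `DownPath σ x y σ'`: a concatenation of elementary down-moves of a single bead brings
it from `x` to `y`, the configuration becoming `σ'`. -/
inductive DownPath : Config L → Pos L → Pos L → Config L → Prop
  | refl (σ : Config L) (x : Pos L) : DownPath σ x x σ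
  | step {σ : Config L} {x y : Pos L} {σ' : Config L} :
      CanDown L σ x → DownPath (downMove L σ x) (x - u L) y σ' → DownPath σ x y σ'

/-- `I⁺_b(σ)`: the set of positions available above the bead at `x`. -/
def Iplus (σ : Config L) (x : Pos L) : Set (Pos L) :=
  {y | y ≠ x ∧ ∃ σ' : Config L, UpPath L σ x y σ'}

/-- `I⁻_b(σ)`: the set of positions available below the bead at `x`. -/
def Iminus (σ : Config L) (x : Pos L) : Set (Pos L) :=
  {y | y ≠ x ∧ ∃ σ' : Config L, DownPath L σ x y σ'}

section BalanceProof

open Finset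

variable {L : ℕ}

private def swap12 : Fin 3 → Fin 3 := ![0, 2, 1]

private def Ucfg [NeZero L] (f : Pos L → Fin 3) : Config L :=
  Finset.univ.image fun z => (z, f z)

private lemma mem_Ucfg [NeZero L] (f : Pos L → Fin 3) (p : Edge L) :
    p ∈ Ucfg f ↔ f p.1 = p.2 := by
  constructor
  · intro h
    simp only [Ucfg, mem_image, mem_univ, true_and] at h
    obtain ⟨z, hz⟩ := h
    rw [← hz]
  · intro h
    simp only [Ucfg, mem_image, mem_univ, true_and]
    exact ⟨p.1, Prod.ext rfl h⟩

private lemma one_ne_zero' (hL : 3 ≤ L) : (1 : ZMod L) ≠ 0 := by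
  haveI : Fact (1 < L) := ⟨by omega⟩
  exact one_ne_zero

private lemma natCast_inj' (hL : 3 ≤ L) {i j : ℕ} (hi : i < L) (hj : j < L)
    (h : (i : ZMod L) = (j : ZMod L)) : i = j := by
  have h2 : i % L = j % L := (ZMod.natCast_eq_natCast_iff i j L).mp h
  rwa [Nat.mod_eq_of_lt hi, Nat.mod_eq_of_lt hj] at h2

private lemma nsmul_u [NeZero L] (k : ℕ) :
    k • u L = ((k : ZMod L), -(k : ZMod L)) := by
  show k • ((1 : ZMod L), (-1 : ZMod L)) = _
  rw [Prod.smul_mk]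
  congr 1
  · rw [nsmul_eq_mul, mul_one]
  · rw [nsmul_eq_mul, mul_neg_one]

-- ## Arithmetic of points

private lemma u_smul_inj (hL : 3 ≤ L) [NeZero L] {i j : ℕ} (hi : i < L) (hj : j < L)
    (h : i • u L = j • u L) : i = j := by
  rw [nsmul_u, nsmul_u, Prod.mk.injEq] at h
  exact natCast_inj' hL hi hj h.1

private lemma P1 (hL : 3 ≤ L) [NeZero L] {x : Pos L} {i j : ℕ} (hi : i < L) (hj : j < L)
    (h : x + i • u L = x + j • u L) : i = j :=
  u_smul_inj hL hi hj (add_left_cancel h)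

private lemma P2 (hL : 3 ≤ L) [NeZero L] (x : Pos L) (i j : ℕ) :
    x + i • u L - (0, 1) ≠ x + j • u L := by
  intro h
  rw [add_sub_assoc] at h
  have h' : i • u L - ((0 : ZMod L), (1 : ZMod L)) = j • u L := add_left_cancel h
  rw [nsmul_u, nsmul_u, Prod.mk_sub_mk, Prod.mk.injEq, sub_zero] at h'
  obtain ⟨h1, h2⟩ := h'
  rw [h1] at h2
  exact one_ne_zero' hL (sub_eq_self.mp h2)

private lemma P2' (hL : 3 ≤ L) [NeZero L] (x : Pos L) (i j : ℕ) :
    x - i • u L - (0, 1) ≠ x - j • u L := by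
  intro h
  obtain ⟨x1, x2⟩ := x
  rw [nsmul_u, nsmul_u] at h
  simp only [Prod.mk_sub_mk, Prod.mk.injEq, sub_zero] at h
  obtain ⟨h1, h2⟩ := h
  rw [sub_right_inj] at h1
  rw [h1] at h2
  exact one_ne_zero' hL (sub_eq_self.mp h2)

private lemma P3 [NeZero L] : L • u L = (0 : Pos L) := by
  rw [nsmul_u, ZMod.natCast_self, neg_zero]
  rfl

private lemma smul_u_ne_zero (hL : 3 ≤ L) [NeZero L] {j : ℕ} (h1 : 1 ≤ j) (h2 : j ≤ L - 1) :
    j • u L ≠ 0 := by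
  intro h
  have : j = 0 := by
    have hL0 : 0 < L := by omega
    have := u_smul_inj hL (i := j) (j := 0) (by omega) hL0 (by rw [h, zero_nsmul])
    exact this
  omega

private lemma P4 (hL : 3 ≤ L) [NeZero L] {x : Pos L} {j : ℕ} (h1 : 1 ≤ j) (h2 : j ≤ L - 1) :
    x + j • u L ≠ x := by
  intro h
  exact smul_u_ne_zero hL h1 h2 (by
    have := add_left_cancel (a := x) (b := j • u L) (c := 0) (by rw [add_zero]; exact h)
    exact this)

private lemma P4' (hL : 3 ≤ L) [NeZero L] {x : Pos L} {j : ℕ} (h1 : 1 ≤ j) (h2 : j ≤ L - 1) :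
    x - j • u L ≠ x := by
  intro h
  exact smul_u_ne_zero hL h1 h2 (sub_eq_self.mp h)

-- identities
private lemma Q1 [NeZero L] (x : Pos L) (j : ℕ) :
    x + (j + 1) • u L = (x + j • u L) + u L := by
  rw [succ_nsmul, ← add_assoc]

private lemma Q1' [NeZero L] (x : Pos L) (j : ℕ) :
    x - (j + 1) • u L = (x - j • u L) - u L := by
  rw [succ_nsmul, sub_add_eq_sub_sub]

private lemma Q2 [NeZero L] (x : Pos L) (j : ℕ) :
    (x + j • u L) - (0, 1) = x + (j + 1) • u L - (1, 0) := by
  obtain ⟨x1, x2⟩ := x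
  rw [nsmul_u, nsmul_u]
  simp only [Prod.mk_add_mk, Prod.mk_sub_mk, Prod.mk.injEq]
  constructor <;> push_cast <;> ring

private lemma Q5 [NeZero L] (x : Pos L) : x + 0 • u L = x := by rw [zero_nsmul, add_zero]

private lemma Q5' [NeZero L] (x : Pos L) : x - 0 • u L = x := by rw [zero_nsmul, sub_zero]

private lemma Q6 [NeZero L] (v : Pos L) {i k : ℕ} (h : i ≤ k) :
    v - k • u L + i • u L = v - (k - i) • u L := by
  have hh : (k - i) • u L + i • u L = k • u L := by
    rw [← add_nsmul, Nat.sub_add_cancel h]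
  rw [← hh]
  abel

private lemma Q6' [NeZero L] (v : Pos L) {i k : ℕ} (h : i ≤ k) :
    v + k • u L - i • u L = v + (k - i) • u L := by
  have hh : (k - i) • u L + i • u L = k • u L := by
    rw [← add_nsmul, Nat.sub_add_cancel h]
  rw [← hh]
  abel

private lemma Q7 [NeZero L] (v : Pos L) : v - L • u L = v := by rw [P3, sub_zero]

private lemma Q7' [NeZero L] (v : Pos L) : v + L • u L = v := by rw [P3, add_zero]
-- ## basic non-degeneracies

private lemma u_ne_zero (hL : 3 ≤ L) [NeZero L] : u L ≠ 0 := by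
  intro h
  have h1 := congrArg Prod.fst h
  exact one_ne_zero' hL h1

private lemma add_u_ne (hL : 3 ≤ L) [NeZero L] (z : Pos L) : z + u L ≠ z := by
  intro h
  exact u_ne_zero hL (by
    have := h
    nth_rewrite 2 [← add_zero z] at this
    exact add_left_cancel this)

private lemma sub01_ne (hL : 3 ≤ L) [NeZero L] (z : Pos L) : z - (0, 1) ≠ z := by
  intro h
  have h1 := congrArg Prod.snd (sub_eq_self.mp h)
  exact one_ne_zero' hL h1

private lemma addu_ne_sub01 (hL : 3 ≤ L) [NeZero L] (z : Pos L) : z + u L ≠ z - (0, 1) := by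
  intro h
  rw [sub_eq_add_neg] at h
  have h2 := add_left_cancel h
  have h3 := congrArg Prod.fst h2
  exact one_ne_zero' hL (by simpa [u] using h3)

private lemma sub_u_ne (hL : 3 ≤ L) [NeZero L] (z : Pos L) : z - u L ≠ z := by
  intro h
  exact u_ne_zero hL (sub_eq_self.mp h)

private lemma subu01_ne (hL : 3 ≤ L) [NeZero L] (z : Pos L) : z - u L - (0, 1) ≠ z := by
  intro h
  rw [sub_sub] at h
  have h1 := sub_eq_self.mp h
  have h2 := congrArg Prod.fst h1
  exact one_ne_zero' hL (by simpa [u] using h2)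

private lemma subu01_ne' (hL : 3 ≤ L) [NeZero L] (z : Pos L) : z - u L - (0, 1) ≠ z - u L := by
  exact sub01_ne hL _

-- ## CanUp / CanDown / moves on functional configurations

private lemma canUp_iff (hL : 3 ≤ L) [NeZero L] (f : Pos L → Fin 3) (z : Pos L) :
    CanUp L (Ucfg f) z ↔ (f z = 0 ∧ f (z + u L) = 2 ∧ f (z - (0, 1)) = 1) := by
  simp only [CanUp, lowTriple, Finset.insert_subset_iff, Finset.singleton_subset_iff,
    mem_Ucfg]

private lemma canDown_iff (hL : 3 ≤ L) [NeZero L] (f : Pos L → Fin 3) (z : Pos L) :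
    CanDown L (Ucfg f) z ↔
      (f (z - u L) = 1 ∧ f z = 0 ∧ f (z - u L - (0, 1)) = 2) := by
  have h1 : z - u L + u L = z := by abel
  simp only [CanDown, highTriple, Finset.insert_subset_iff, Finset.singleton_subset_iff,
    mem_Ucfg, h1]

private def upd3 [NeZero L] (f : Pos L → Fin 3) (z : Pos L) : Pos L → Fin 3 :=
  fun a => if a = z then 1 else if a = z + u L then 0 else if a = z - (0, 1) then 2 else f a

private def dnd3 [NeZero L] (f : Pos L → Fin 3) (z : Pos L) : Pos L → Fin 3 :=
  fun a => if a = z then 2 else if a = z - u L then 0 else if a = z - u L - (0, 1) then 1 else f a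

private lemma upMove_eq (hL : 3 ≤ L) [NeZero L] (f : Pos L → Fin 3) (z : Pos L)
    (h0 : f z = 0) (h2 : f (z + u L) = 2) (hA : f (z - (0, 1)) = 1) :
    upMove L (Ucfg f) z = Ucfg (upd3 f z) := by
  have d1 := add_u_ne hL z
  have d2 := sub01_ne hL z
  have d3 := addu_ne_sub01 hL z
  ext ⟨a, d⟩
  simp only [upMove, Finset.mem_union, Finset.mem_sdiff, mem_Ucfg, lowTriple, highTriple,
    Finset.mem_insert, Finset.mem_singleton, Prod.mk.injEq, upd3]
  by_cases ha1 : a = z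
  · subst ha1
    simp [h0, d1, d2, d3, Ne.symm d1, Ne.symm d2, Ne.symm d3, eq_comm]
  · by_cases ha2 : a = z + u L
    · subst ha2
      simp [h2, d1, d2, d3, Ne.symm d1, Ne.symm d2, Ne.symm d3, eq_comm]
    · by_cases ha3 : a = z - (0, 1)
      · subst ha3
        simp [hA, d1, d2, d3, Ne.symm d1, Ne.symm d2, Ne.symm d3, eq_comm]
      · simp [ha1, ha2, ha3]

private lemma downMove_eq (hL : 3 ≤ L) [NeZero L] (f : Pos L → Fin 3) (z : Pos L)
    (h0 : f z = 0) (h1 : f (z - u L) = 1) (h2 : f (z - u L - (0, 1)) = 2) :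
    downMove L (Ucfg f) z = Ucfg (dnd3 f z) := by
  have d1 : z - u L ≠ z := sub_u_ne hL z
  have d2 : z - u L - (0, 1) ≠ z := subu01_ne hL z
  have d3 : z - u L - (0, 1) ≠ z - u L := subu01_ne' hL z
  have e1 : z - u L + u L = z := by abel
  ext ⟨a, d⟩
  simp only [downMove, Finset.mem_union, Finset.mem_sdiff, mem_Ucfg, lowTriple, highTriple,
    Finset.mem_insert, Finset.mem_singleton, Prod.mk.injEq, dnd3, e1]
  by_cases ha1 : a = z
  · subst ha1
    simp [h0, d1, d2, d3, Ne.symm d1, Ne.symm d2, Ne.symm d3, eq_comm]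
  · by_cases ha2 : a = z - u L
    · subst ha2
      simp [h1, d1, d2, d3, Ne.symm d1, Ne.symm d2, Ne.symm d3, eq_comm]
    · by_cases ha3 : a = z - u L - (0, 1)
      · subst ha3
        simp [h2, d1, d2, d3, Ne.symm d1, Ne.symm d2, Ne.symm d3, eq_comm]
      · simp [ha1, ha2, ha3]
-- ## evolving white functions along a jump

private def wup [NeZero L] (w : Pos L → Fin 3) (x : Pos L) : ℕ → Pos L → Fin 3
  | 0 => w
  | j + 1 => upd3 (wup w x j) (x + j • u L)

private def wdn [NeZero L] (w : Pos L → Fin 3) (x : Pos L) : ℕ → Pos L → Fin 3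
  | 0 => w
  | j + 1 => dnd3 (wdn w x j) (x - j • u L)

private lemma wup_bead (hL : 3 ≤ L) [NeZero L] (w : Pos L → Fin 3) (x : Pos L)
    (hx : w x = 0) : ∀ j : ℕ, wup w x j (x + j • u L) = 0 := by
  intro j
  cases j with
  | zero => rw [wup, Q5]; exact hx
  | succ j =>
    show upd3 (wup w x j) (x + j • u L) (x + (j + 1) • u L) = 0
    rw [upd3]
    rw [if_neg, if_pos (Q1 x j)]
    rw [Q1]
    exact fun h => add_u_ne hL _ h

private lemma wup_base (hL : 3 ≤ L) [NeZero L] (w : Pos L → Fin 3) (x : Pos L) :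
    ∀ j : ℕ, 1 ≤ j → j ≤ L - 1 → wup w x j x = 1 := by
  intro j
  induction j with
  | zero => omega
  | succ j ih =>
    intro _ hj
    show upd3 (wup w x j) (x + j • u L) x = 1
    rcases Nat.eq_zero_or_pos j with rfl | hj1
    · rw [upd3, if_pos]
      rw [Q5]
    · rw [upd3, if_neg, if_neg, if_neg]
      · exact ih hj1 (by omega)
      · intro h
        exact P2 hL x j 0 (by rw [Q5]; exact h.symm)
      · intro h
        rw [← Q1] at h
        exact P4 hL (j := j + 1) (by omega) (by omega) h.symm
      · intro h
        exact P4 hL (j := j) (by omega) (by omega) h.symm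

private lemma wup_untouched (hL : 3 ≤ L) [NeZero L] (w : Pos L → Fin 3) (x : Pos L) :
    ∀ j : ℕ, ∀ a : Pos L, (∀ i : ℕ, i ≤ j → a ≠ x + i • u L) →
      (∀ i : ℕ, i < j → a ≠ x + i • u L - (0, 1)) → wup w x j a = w a := by
  intro j
  induction j with
  | zero => intro a _ _; rfl
  | succ j ih =>
    intro a h1 h2
    show upd3 (wup w x j) (x + j • u L) a = w a
    rw [upd3, if_neg (h1 j (by omega)), if_neg, if_neg (h2 j (by omega))]
    · exact ih a (fun i hi => h1 i (by omega)) (fun i hi => h2 i (by omega))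
    · rw [← Q1]
      exact h1 (j + 1) le_rfl

private lemma wdn_bead (hL : 3 ≤ L) [NeZero L] (w : Pos L → Fin 3) (x : Pos L)
    (hx : w x = 0) : ∀ j : ℕ, wdn w x j (x - j • u L) = 0 := by
  intro j
  cases j with
  | zero => rw [wdn, Q5']; exact hx
  | succ j =>
    show dnd3 (wdn w x j) (x - j • u L) (x - (j + 1) • u L) = 0
    rw [dnd3]
    rw [if_neg, if_pos (Q1' x j)]
    rw [Q1']
    exact fun h => sub_u_ne hL _ h

private lemma wdn_base (hL : 3 ≤ L) [NeZero L] (w : Pos L → Fin 3) (x : Pos L) :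
    ∀ j : ℕ, 1 ≤ j → j ≤ L - 1 → wdn w x j x = 2 := by
  intro j
  induction j with
  | zero => omega
  | succ j ih =>
    intro _ hj
    show dnd3 (wdn w x j) (x - j • u L) x = 2
    rcases Nat.eq_zero_or_pos j with rfl | hj1
    · rw [dnd3, if_pos]
      rw [Q5']
    · rw [dnd3, if_neg, if_neg, if_neg]
      · exact ih hj1 (by omega)
      · intro h
        rw [← Q1'] at h
        exact P2' hL x (j + 1) 0 (by rw [Q5']; exact h.symm)
      · intro h
        rw [← Q1'] at h
        exact P4' hL (j := j + 1) (by omega) (by omega) h.symm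
      · intro h
        exact P4' hL (j := j) (by omega) (by omega) h.symm

private lemma wdn_untouched (hL : 3 ≤ L) [NeZero L] (w : Pos L → Fin 3) (x : Pos L) :
    ∀ j : ℕ, ∀ a : Pos L, (∀ i : ℕ, i ≤ j → a ≠ x - i • u L) →
      (∀ i : ℕ, 1 ≤ i → i ≤ j → a ≠ x - i • u L - (0, 1)) → wdn w x j a = w a := by
  intro j
  induction j with
  | zero => intro a _ _; rfl
  | succ j ih =>
    intro a h1 h2
    show dnd3 (wdn w x j) (x - j • u L) a = w a
    rw [dnd3, if_neg (h1 j (by omega)), if_neg, if_neg]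
    · exact ih a (fun i hi => h1 i (by omega)) (fun i hi1 hi2 => h2 i hi1 (by omega))
    · rw [← Q1']
      exact h2 (j + 1) (by omega) le_rfl
    · rw [← Q1']
      exact h1 (j + 1) le_rfl
-- ## the X / Y local patterns

private def Xv [NeZero L] (w : Pos L → Fin 3) (v : Pos L) : Prop :=
  w v = 2 ∧ w (v - (1, 0)) = 1

private def Yv [NeZero L] (w : Pos L → Fin 3) (v : Pos L) : Prop :=
  w v = 1 ∧ w (v - (0, 1)) = 2

private lemma P1' (hL : 3 ≤ L) [NeZero L] {x : Pos L} {i j : ℕ} (hi : i < L) (hj : j < L)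
    (h : x - i • u L = x - j • u L) : i = j :=
  u_smul_inj hL hi hj (by
    have h2 := sub_right_inj.mp h
    exact h2)

-- untouched-point computations used in both directions (up)
private lemma wup_at_next (hL : 3 ≤ L) [NeZero L] (w : Pos L → Fin 3) (x : Pos L)
    {j : ℕ} (hj : j + 1 ≤ L - 1) :
    wup w x j (x + (j + 1) • u L) = w (x + (j + 1) • u L) := by
  apply wup_untouched hL
  · intro i hi h
    have := P1 hL (x := x) (i := j + 1) (j := i) (by omega) (by omega) h
    omega
  · intro i hi h
    exact P2 hL x i (j + 1) h.symm

private lemma wup_at_side (hL : 3 ≤ L) [NeZero L] (w : Pos L → Fin 3) (x : Pos L)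
    {j : ℕ} (hj : j ≤ L - 1) :
    wup w x j (x + j • u L - (0, 1)) = w (x + j • u L - (0, 1)) := by
  apply wup_untouched hL
  · intro i hi h
    exact P2 hL x j i h
  · intro i hi h
    have h' : x + j • u L = x + i • u L := sub_left_inj.mp h
    have := P1 hL (x := x) (i := j) (j := i) (by omega) (by omega) h'
    omega

private lemma up_bound (hL : 3 ≤ L) [NeZero L] (w : Pos L → Fin 3) (x : Pos L) (hx : w x = 0)
    {σ₀ : Config L} {z y : Pos L} {σ'' : Config L} (hp : UpPath L σ₀ z y σ'') :
    ∀ j : ℕ, j ≤ L - 1 → σ₀ = Ucfg (wup w x j) → z = x + j • u L →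
      ∃ m : ℕ, j ≤ m ∧ m ≤ L - 1 ∧ y = x + m • u L ∧
        ∀ i : ℕ, j < i → i ≤ m → Xv w (x + i • u L) := by
  induction hp with
  | refl σ1 z1 =>
    intro j hj hσ hz
    exact ⟨j, le_rfl, hj, hz, fun i h1 h2 => absurd h1 (by omega)⟩
  | @step σ1 z1 y1 σ1' hcan hrest ih =>
    intro j hj hσ hz
    subst hσ hz
    rw [canUp_iff hL] at hcan
    obtain ⟨-, hc2, hc3⟩ := hcan
    rcases Nat.lt_or_ge j (L - 1) with hjlt | hjge
    · have e1 : x + j • u L + u L = x + (j + 1) • u L := (Q1 x j).symm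
      have hc2' : wup w x j (x + (j + 1) • u L) = 2 := by rw [← e1]; exact hc2
      have hc2w : w (x + (j + 1) • u L) = 2 := by
        rw [← wup_at_next hL w x (by omega)]; exact hc2'
      have hc3w : w (x + j • u L - (0, 1)) = 1 := by
        rw [← wup_at_side hL w x (by omega : j ≤ L - 1)]; exact hc3
      have hX : Xv w (x + (j + 1) • u L) := ⟨hc2w, by rw [← Q2]; exact hc3w⟩
      have hmove : upMove L (Ucfg (wup w x j)) (x + j • u L) = Ucfg (wup w x (j + 1)) :=
        upMove_eq hL _ _ (wup_bead hL w x hx j) hc2 hc3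
      obtain ⟨m, hm1, hm2, hm3, hm4⟩ := ih (j + 1) (by omega) hmove e1
      refine ⟨m, by omega, hm2, hm3, ?_⟩
      intro i hi1 hi2
      rcases Nat.eq_or_lt_of_le (by omega : j + 1 ≤ i) with heq | hlt
      · rw [← heq]; exact hX
      · exact hm4 i hlt hi2
    · exfalso
      have hje : j = L - 1 := by omega
      subst hje
      have e2 : x + (L - 1) • u L + u L = x := by
        rw [← Q1, show L - 1 + 1 = L by omega, Q7']
      rw [e2, wup_base hL w x (L - 1) (by omega) le_rfl] at hc2
      exact absurd hc2 (by decide)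

private lemma up_reach (hL : 3 ≤ L) [NeZero L] (w : Pos L → Fin 3) (x : Pos L)
    (hx : w x = 0) :
    ∀ k j : ℕ, j + k ≤ L - 1 → (∀ i : ℕ, j < i → i ≤ j + k → Xv w (x + i • u L)) →
      ∃ σ' : Config L, UpPath L (Ucfg (wup w x j)) (x + j • u L) (x + (j + k) • u L) σ' := by
  intro k
  induction k with
  | zero => intro j _ _; exact ⟨_, UpPath.refl _ _⟩
  | succ k ih =>
    intro j hjk hXs
    have hX : Xv w (x + (j + 1) • u L) := hXs (j + 1) (by omega) (by omega)
    have e1 : x + j • u L + u L = x + (j + 1) • u L := (Q1 x j).symm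
    have hc2 : wup w x j (x + j • u L + u L) = 2 := by
      rw [e1, wup_at_next hL w x (by omega)]; exact hX.1
    have hc3 : wup w x j (x + j • u L - (0, 1)) = 1 := by
      rw [wup_at_side hL w x (by omega : j ≤ L - 1), Q2]; exact hX.2
    have hcan : CanUp L (Ucfg (wup w x j)) (x + j • u L) := by
      rw [canUp_iff hL]
      exact ⟨wup_bead hL w x hx j, hc2, hc3⟩
    obtain ⟨σ', hp⟩ := ih (j + 1) (by omega) (fun i h1 h2 => hXs i (by omega) (by omega))
    refine ⟨σ', UpPath.step hcan ?_⟩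
    rw [upMove_eq hL _ _ (wup_bead hL w x hx j) hc2 hc3, e1,
      show j + (k + 1) = (j + 1) + k from by omega]
    exact hp

-- down versions
private lemma wdn_at_next (hL : 3 ≤ L) [NeZero L] (w : Pos L → Fin 3) (x : Pos L)
    {j : ℕ} (hj : j + 1 ≤ L - 1) :
    wdn w x j (x - (j + 1) • u L) = w (x - (j + 1) • u L) := by
  apply wdn_untouched hL
  · intro i hi h
    have := P1' hL (x := x) (i := j + 1) (j := i) (by omega) (by omega) h
    omega
  · intro i hi1 hi2 h
    exact P2' hL x i (j + 1) h.symm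

private lemma wdn_at_side (hL : 3 ≤ L) [NeZero L] (w : Pos L → Fin 3) (x : Pos L)
    {j : ℕ} (hj : j + 1 ≤ L - 1) :
    wdn w x j (x - (j + 1) • u L - (0, 1)) = w (x - (j + 1) • u L - (0, 1)) := by
  apply wdn_untouched hL
  · intro i hi h
    exact P2' hL x (j + 1) i h
  · intro i hi1 hi2 h
    have h' : x - (j + 1) • u L = x - i • u L := sub_left_inj.mp h
    have := P1' hL (x := x) (i := j + 1) (j := i) (by omega) (by omega) h'
    omega

private lemma down_bound (hL : 3 ≤ L) [NeZero L] (w : Pos L → Fin 3) (x : Pos L) (hx : w x = 0)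
    {σ₀ : Config L} {z y : Pos L} {σ'' : Config L} (hp : DownPath L σ₀ z y σ'') :
    ∀ j : ℕ, j ≤ L - 1 → σ₀ = Ucfg (wdn w x j) → z = x - j • u L →
      ∃ m : ℕ, j ≤ m ∧ m ≤ L - 1 ∧ y = x - m • u L ∧
        ∀ i : ℕ, j < i → i ≤ m → Yv w (x - i • u L) := by
  induction hp with
  | refl σ1 z1 =>
    intro j hj hσ hz
    exact ⟨j, le_rfl, hj, hz, fun i h1 h2 => absurd h1 (by omega)⟩
  | @step σ1 z1 y1 σ1' hcan hrest ih =>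
    intro j hj hσ hz
    subst hσ hz
    rw [canDown_iff hL] at hcan
    obtain ⟨hc1, -, hc3⟩ := hcan
    rcases Nat.lt_or_ge j (L - 1) with hjlt | hjge
    · have e1 : x - j • u L - u L = x - (j + 1) • u L := (Q1' x j).symm
      have hc1' : wdn w x j (x - (j + 1) • u L) = 1 := by rw [← e1]; exact hc1
      have hc1w : w (x - (j + 1) • u L) = 1 := by
        rw [← wdn_at_next hL w x (by omega)]; exact hc1'
      have hc3w : w (x - (j + 1) • u L - (0, 1)) = 2 := by
        rw [← wdn_at_side hL w x (by omega)]
        rw [← e1]; exact hc3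
      have hY : Yv w (x - (j + 1) • u L) := ⟨hc1w, hc3w⟩
      have hmove : downMove L (Ucfg (wdn w x j)) (x - j • u L) = Ucfg (wdn w x (j + 1)) :=
        downMove_eq hL _ _ (wdn_bead hL w x hx j) hc1 hc3
      obtain ⟨m, hm1, hm2, hm3, hm4⟩ := ih (j + 1) (by omega) hmove e1
      refine ⟨m, by omega, hm2, hm3, ?_⟩
      intro i hi1 hi2
      rcases Nat.eq_or_lt_of_le (by omega : j + 1 ≤ i) with heq | hlt
      · rw [← heq]; exact hY
      · exact hm4 i hlt hi2
    · exfalso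
      have hje : j = L - 1 := by omega
      subst hje
      have e2 : x - (L - 1) • u L - u L = x := by
        rw [← Q1', show L - 1 + 1 = L by omega, Q7]
      rw [e2, wdn_base hL w x (L - 1) (by omega) le_rfl] at hc1
      exact absurd hc1 (by decide)

private lemma down_reach (hL : 3 ≤ L) [NeZero L] (w : Pos L → Fin 3) (x : Pos L)
    (hx : w x = 0) :
    ∀ k j : ℕ, j + k ≤ L - 1 → (∀ i : ℕ, j < i → i ≤ j + k → Yv w (x - i • u L)) →
      ∃ σ' : Config L, DownPath L (Ucfg (wdn w x j)) (x - j • u L) (x - (j + k) • u L) σ' := by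
  intro k
  induction k with
  | zero => intro j _ _; exact ⟨_, DownPath.refl _ _⟩
  | succ k ih =>
    intro j hjk hYs
    have hY : Yv w (x - (j + 1) • u L) := hYs (j + 1) (by omega) (by omega)
    have e1 : x - j • u L - u L = x - (j + 1) • u L := (Q1' x j).symm
    have hc1 : wdn w x j (x - j • u L - u L) = 1 := by
      rw [e1, wdn_at_next hL w x (by omega)]; exact hY.1
    have hc3 : wdn w x j (x - j • u L - u L - (0, 1)) = 2 := by
      rw [e1, wdn_at_side hL w x (by omega)]; exact hY.2
    have hcan : CanDown L (Ucfg (wdn w x j)) (x - j • u L) := by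
      rw [canDown_iff hL]
      exact ⟨hc1, wdn_bead hL w x hx j, hc3⟩
    obtain ⟨σ', hp⟩ := ih (j + 1) (by omega) (fun i h1 h2 => hYs i (by omega) (by omega))
    refine ⟨σ', DownPath.step hcan ?_⟩
    rw [downMove_eq hL _ _ (wdn_bead hL w x hx j) hc1 hc3, e1,
      show j + (k + 1) = (j + 1) + k from by omega]
    exact hp
open scoped Classical in
private lemma Iplus_ncard (hL : 3 ≤ L) [NeZero L] {σ : Config L} (w : Pos L → Fin 3)
    (hmem : ∀ p : Edge L, p ∈ σ ↔ w p.1 = p.2) {x : Pos L} (hx : w x = 0) :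
    (Iplus L σ x).ncard =
      (((Finset.Icc 1 (L - 1)).filter
        (fun j => ∀ i : ℕ, 1 ≤ i → i ≤ j → Xv w (x + i • u L))).card) := by
  have hσU : σ = Ucfg w := by
    ext p
    rw [hmem, mem_Ucfg]
  have hset : Iplus L σ x = ↑(((Finset.Icc 1 (L - 1)).filter
      (fun j => ∀ i : ℕ, 1 ≤ i → i ≤ j → Xv w (x + i • u L))).image
        (fun j => x + j • u L)) := by
    ext y
    simp only [Iplus, Set.mem_setOf_eq, Finset.coe_image, Set.mem_image, Finset.mem_coe,
      Finset.mem_filter, Finset.mem_Icc]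
    constructor
    · rintro ⟨hne, σ', hp⟩
      obtain ⟨m, -, hm2, hm3, hm4⟩ := up_bound hL w x hx hp 0 (by omega)
        (by rw [hσU]; rfl) (Q5 x).symm
      have hm0 : m ≠ 0 := by
        intro h
        exact hne (by rw [hm3, h, Q5])
      exact ⟨m, ⟨⟨by omega, hm2⟩, fun i h1 h2 => hm4 i (by omega) h2⟩, hm3.symm⟩
    · rintro ⟨j, ⟨⟨hj1, hj2⟩, hXs⟩, rfl⟩
      refine ⟨P4 hL hj1 hj2, ?_⟩
      obtain ⟨σ', hp⟩ := up_reach hL w x hx j 0 (by omega)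
        (fun i h1 h2 => hXs i (by omega) (by omega))
      rw [Q5, show (0 + j) = j from by omega] at hp
      exact ⟨σ', by rw [hσU]; exact hp⟩
  rw [hset, Set.ncard_coe_finset]
  apply Finset.card_image_of_injOn
  intro a ha b hb hab
  simp only [Finset.coe_filter, Finset.mem_Icc, Set.mem_setOf_eq] at ha hb
  exact P1 hL (by omega) (by omega) hab

open scoped Classical in
private lemma Iminus_ncard (hL : 3 ≤ L) [NeZero L] {σ : Config L} (w : Pos L → Fin 3)
    (hmem : ∀ p : Edge L, p ∈ σ ↔ w p.1 = p.2) {x : Pos L} (hx : w x = 0) :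
    (Iminus L σ x).ncard =
      (((Finset.Icc 1 (L - 1)).filter
        (fun j => ∀ i : ℕ, 1 ≤ i → i ≤ j → Yv w (x - i • u L))).card) := by
  have hσU : σ = Ucfg w := by
    ext p
    rw [hmem, mem_Ucfg]
  have hset : Iminus L σ x = ↑(((Finset.Icc 1 (L - 1)).filter
      (fun j => ∀ i : ℕ, 1 ≤ i → i ≤ j → Yv w (x - i • u L))).image
        (fun j => x - j • u L)) := by
    ext y
    simp only [Iminus, Set.mem_setOf_eq, Finset.coe_image, Set.mem_image, Finset.mem_coe,
      Finset.mem_filter, Finset.mem_Icc]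
    constructor
    · rintro ⟨hne, σ', hp⟩
      obtain ⟨m, -, hm2, hm3, hm4⟩ := down_bound hL w x hx hp 0 (by omega)
        (by rw [hσU]; rfl) (Q5' x).symm
      have hm0 : m ≠ 0 := by
        intro h
        exact hne (by rw [hm3, h, Q5'])
      exact ⟨m, ⟨⟨by omega, hm2⟩, fun i h1 h2 => hm4 i (by omega) h2⟩, hm3.symm⟩
    · rintro ⟨j, ⟨⟨hj1, hj2⟩, hYs⟩, rfl⟩
      refine ⟨P4' hL hj1 hj2, ?_⟩
      obtain ⟨σ', hp⟩ := down_reach hL w x hx j 0 (by omega)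
        (fun i h1 h2 => hYs i (by omega) (by omega))
      rw [Q5', show (0 + j) = j from by omega] at hp
      exact ⟨σ', by rw [hσU]; exact hp⟩
  rw [hset, Set.ncard_coe_finset]
  apply Finset.card_image_of_injOn
  intro a ha b hb hab
  simp only [Finset.coe_filter, Finset.mem_Icc, Set.mem_setOf_eq] at ha hb
  exact P1' hL (by omega) (by omega) hab
-- ## consequences of the black-vertex constraint

private lemma fin3 (d : Fin 3) : d = 0 ∨ d = 1 ∨ d = 2 := by
  fin_cases d <;> simp

private lemma dvec0 [NeZero L] : dvec L 0 = 0 := rfl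
private lemma dvec1 [NeZero L] : dvec L 1 = ((1 : ZMod L), (0 : ZMod L)) := rfl
private lemma dvec2 [NeZero L] : dvec L 2 = ((0 : ZMod L), (1 : ZMod L)) := rfl

private lemma I1 [NeZero L] (v : Pos L) : v - u L - (0, 1) = v - (1, 0) := by
  obtain ⟨a, b⟩ := v
  simp only [u, Prod.mk_sub_mk, Prod.mk.injEq]
  constructor <;> ring

private lemma I2 [NeZero L] (v : Pos L) : v + (0, 1) - (1, 0) = v - u L := by
  obtain ⟨a, b⟩ := v
  simp only [u, Prod.mk_add_mk, Prod.mk_sub_mk, Prod.mk.injEq]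
  constructor <;> ring

private lemma I4 [NeZero L] (v : Pos L) : v + u L - (1, 0) = v - (0, 1) := by
  obtain ⟨a, b⟩ := v
  simp only [u, Prod.mk_add_mk, Prod.mk_sub_mk, Prod.mk.injEq]
  constructor <;> ring

private lemma I6 [NeZero L] (v : Pos L) : v + (1, 0) - (0, 1) = v + u L := by
  obtain ⟨a, b⟩ := v
  simp only [u, Prod.mk_add_mk, Prod.mk_sub_mk, Prod.mk.injEq]
  constructor <;> ring

variable [NeZero L] {w : Pos L → Fin 3}

private def BCE [NeZero L] (w : Pos L → Fin 3) : Prop :=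
  ∀ v : Pos L, ∃ d : Fin 3, w (v - dvec L d) = d

private def BCU [NeZero L] (w : Pos L → Fin 3) : Prop :=
  ∀ v : Pos L, ∀ d d' : Fin 3,
    w (v - dvec L d) = d → w (v - dvec L d') = d' → d = d'

private lemma factX1 (hBCe : BCE w) {v : Pos L} (hX : Xv w v) (h2 : w (v - u L) = 2) : Xv w (v - u L) := by
  obtain ⟨d, hd⟩ := hBCe (v - u L)
  rcases fin3 d with rfl | rfl | rfl
  · rw [dvec0, sub_zero] at hd
    rw [hd] at h2
    exact absurd h2 (by decide)
  · exact ⟨h2, by rw [dvec1] at hd; exact hd⟩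
  · rw [dvec2, I1] at hd
    rw [hX.2] at hd
    exact absurd hd (by decide)

private lemma factX2 (hBCu : BCU w) {v : Pos L} (hX : Xv w v) : w (v - u L) ≠ 1 := by
  intro h1
  have w1 : w (v + (0, 1) - dvec L 1) = 1 := by rw [dvec1, I2]; exact h1
  have w2 : w (v + (0, 1) - dvec L 2) = 2 := by
    rw [dvec2, add_sub_cancel_right]; exact hX.1
  exact absurd (hBCu (v + (0, 1)) 1 2 w1 w2) (by decide)

private lemma factY1 (hBCe : BCE w) {v : Pos L} (hY : Yv w v) (h1 : w (v + u L) = 1) : Yv w (v + u L) := by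
  obtain ⟨d, hd⟩ := hBCe (v + u L)
  rcases fin3 d with rfl | rfl | rfl
  · rw [dvec0, sub_zero] at hd
    rw [hd] at h1
    exact absurd h1 (by decide)
  · rw [dvec1, I4] at hd
    rw [hY.2] at hd
    exact absurd hd (by decide)
  · exact ⟨h1, by rw [dvec2] at hd; exact hd⟩

private lemma factY2 (hBCu : BCU w) {v : Pos L} (hY : Yv w v) : w (v + u L) ≠ 2 := by
  intro h2
  have w1 : w (v + (1, 0) - dvec L 1) = 1 := by rw [dvec1, add_sub_cancel_right]; exact hY.1
  have w2 : w (v + (1, 0) - dvec L 2) = 2 := by rw [dvec2, I6]; exact h2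
  exact absurd (hBCu (v + (1, 0)) 1 2 w1 w2) (by decide)

private lemma factXB (hBCe : BCE w) (hBCu : BCU w) (v : Pos L) : Xv w v ↔ (w v = 2 ∧ ¬ w (v - (0, 1)) = 2) := by
  constructor
  · intro hX
    refine ⟨hX.1, fun hq => ?_⟩
    have w1 : w (v - dvec L 1) = 1 := by rw [dvec1]; exact hX.2
    have w2 : w (v - dvec L 2) = 2 := by rw [dvec2]; exact hq
    exact absurd (hBCu v 1 2 w1 w2) (by decide)
  · rintro ⟨h2, hq⟩
    obtain ⟨d, hd⟩ := hBCe v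
    rcases fin3 d with rfl | rfl | rfl
    · rw [dvec0, sub_zero] at hd
      rw [hd] at h2
      exact absurd h2 (by decide)
    · exact ⟨h2, by rw [dvec1] at hd; exact hd⟩
    · rw [dvec2] at hd
      exact absurd hd hq
 
private lemma factYB (hBCu : BCU w) (v : Pos L) : Yv w v ↔ (w (v - (0, 1)) = 2 ∧ ¬ w v = 2) := by
  constructor
  · intro hY
    exact ⟨hY.2, by rw [hY.1]; decide⟩
  · rintro ⟨hq, hne⟩
    have h0 : w v ≠ 0 := by
      intro h0
      have w0 : w (v - dvec L 0) = 0 := by rw [dvec0, sub_zero]; exact h0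
      have w2 : w (v - dvec L 2) = 2 := by rw [dvec2]; exact hq
      exact absurd (hBCu v 0 2 w0 w2) (by decide)
    rcases fin3 (w v) with h | h | h
    · exact absurd h h0
    · exact ⟨h, hq⟩
    · exact absurd h hne

-- ## counting jumps

private lemma Q8 [NeZero L] (v : Pos L) {k : ℕ} (hk : k ≤ L) :
    v - (L - k) • u L = v + k • u L := by
  have h1 : (L - k) • u L + k • u L = 0 := by
    rw [← add_nsmul, Nat.sub_add_cancel hk, P3]
  rw [eq_neg_of_add_eq_zero_left h1, sub_neg_eq_add]

open scoped Classical in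
private lemma count_up (hL : 3 ≤ L) [NeZero L] (w : Pos L → Fin 3)
    (hBCe : BCE w) (hBCu : BCU w)
    (hbead : ∀ z : Pos L, ∃ k : ℕ, k < L ∧ w (z + k • u L) = 0) :
    ∑ b ∈ Finset.univ.filter (fun b => w b = 0),
        (((Finset.Icc 1 (L - 1)).filter
          (fun j => ∀ i : ℕ, 1 ≤ i → i ≤ j → Xv w (b + i • u L))).card)
      = (Finset.univ.filter (fun v => Xv w v)).card := by
  rw [← Finset.card_sigma]
  have hinj : ∀ (b j b' j' : _), w b = 0 → w b' = 0 →
      (∀ i : ℕ, 1 ≤ i → i ≤ j' → Xv w (b' + i • u L)) → j ≤ j' →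
      b + j • u L = b' + j' • u L → b = b' ∧ j = j' := by
    intro b j b' j' hb hb' hX' hjj' heq
    have hd : b = b' + (j' - j) • u L := by
      have h1 : (j' - j) • u L + j • u L = j' • u L := by
        rw [← add_nsmul, Nat.sub_add_cancel hjj']
      have h2 : b + j • u L = b' + ((j' - j) • u L + j • u L) := by rw [h1]; exact heq
      rw [← add_assoc] at h2
      exact add_right_cancel h2
    by_cases h0 : j' - j = 0
    · rw [h0, zero_nsmul, add_zero] at hd
      exact ⟨hd, by omega⟩
    · exfalso
      have hXd := (hX' (j' - j) (by omega) (by omega)).1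
      rw [← hd, hb] at hXd
      exact absurd hXd (by decide)
  apply Finset.card_bij (fun (p : (_ : Pos L) × ℕ) _ => p.1 + p.2 • u L)
  · rintro ⟨b, j⟩ hp
    rw [Finset.mem_sigma] at hp
    obtain ⟨hb, hj⟩ := hp
    rw [Finset.mem_filter, Finset.mem_Icc] at hj
    simp only [Finset.mem_filter, Finset.mem_univ, true_and]
    exact hj.2 j hj.1.1 le_rfl
  · rintro ⟨b, j⟩ hp ⟨b', j'⟩ hp' heq
    rw [Finset.mem_sigma, Finset.mem_filter, Finset.mem_filter, Finset.mem_Icc] at hp hp'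
    simp only [Finset.mem_univ, true_and] at hp hp'
    rcases le_total j j' with hle | hle
    · obtain ⟨h1, h2⟩ := hinj b j b' j' hp.1 hp'.1 hp'.2.2 hle heq
      subst h1; subst h2; rfl
    · obtain ⟨h1, h2⟩ := hinj b' j' b j hp'.1 hp.1 hp.2.2 hle heq.symm
      subst h1; subst h2; rfl
  · intro v hv
    rw [Finset.mem_filter] at hv
    obtain ⟨-, hXv⟩ := hv
    -- find the first non-X position below v
    have hTne : ((Finset.Icc 1 L).filter (fun k => ¬ Xv w (v - k • u L))).Nonempty := by
      obtain ⟨k₀, hk₀L, hk₀⟩ := hbead v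
      have hk₀0 : k₀ ≠ 0 := by
        intro h
        rw [h, Q5] at hk₀
        have h2 := hXv.1
        rw [hk₀] at h2
        exact absurd h2 (by decide)
      refine ⟨L - k₀, ?_⟩
      rw [Finset.mem_filter, Finset.mem_Icc]
      refine ⟨⟨by omega, by omega⟩, ?_⟩
      intro hX
      have h2 := hX.1
      rw [Q8 v (by omega), hk₀] at h2
      exact absurd h2 (by decide)
    set k₁ := (((Finset.Icc 1 L).filter (fun k => ¬ Xv w (v - k • u L)))).min' hTne with hk₁def
    have hk₁mem := Finset.min'_mem _ hTne
    rw [Finset.mem_filter, Finset.mem_Icc] at hk₁mem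
    obtain ⟨⟨hk₁1, hk₁L⟩, hk₁X⟩ := hk₁mem
    have claimX : ∀ i : ℕ, i < k₁ → Xv w (v - i • u L) := by
      intro i hi
      rcases Nat.eq_zero_or_pos i with rfl | hi1
      · rw [Q5']; exact hXv
      · by_contra hc
        have : i ∈ (Finset.Icc 1 L).filter (fun k => ¬ Xv w (v - k • u L)) := by
          rw [Finset.mem_filter, Finset.mem_Icc]
          exact ⟨⟨by omega, by omega⟩, hc⟩
        have := Finset.min'_le _ i this
        omega
    have hXp : Xv w (v - (k₁ - 1) • u L) := claimX (k₁ - 1) (by omega)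
    have e : v - (k₁ - 1) • u L - u L = v - k₁ • u L := by
      rw [← Q1', show k₁ - 1 + 1 = k₁ from by omega]
    have claim0 : w (v - k₁ • u L) = 0 := by
      have h1 : w (v - k₁ • u L) ≠ 1 := by
        rw [← e]
        exact factX2 hBCu hXp
      have h2 : w (v - k₁ • u L) ≠ 2 := by
        intro h
        apply hk₁X
        have := factX1 hBCe hXp (by rw [e]; exact h)
        rw [e] at this
        exact this
      rcases fin3 (w (v - k₁ • u L)) with h | h | h
      · exact h
      · exact absurd h h1
      · exact absurd h h2
    have hk₁L1 : k₁ ≤ L - 1 := by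
      rcases Nat.lt_or_ge k₁ L with h | h
      · omega
      · exfalso
        have : k₁ = L := by omega
        rw [this, Q7] at claim0
        have h2 := hXv.1
        rw [claim0] at h2
        exact absurd h2 (by decide)
    refine ⟨⟨v - k₁ • u L, k₁⟩, ?_, ?_⟩
    · rw [Finset.mem_sigma, Finset.mem_filter, Finset.mem_filter, Finset.mem_Icc]
      refine ⟨⟨Finset.mem_univ _, claim0⟩, ⟨hk₁1, hk₁L1⟩, ?_⟩
      intro i hi1 hi2
      rw [Q6 v hi2]
      exact claimX (k₁ - i) (by omega)
    · show v - k₁ • u L + k₁ • u L = v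
      rw [Q6 v le_rfl, Nat.sub_self, Q5']

open scoped Classical in
private lemma count_down (hL : 3 ≤ L) [NeZero L] (w : Pos L → Fin 3)
    (hBCe : BCE w) (hBCu : BCU w)
    (hbead : ∀ z : Pos L, ∃ k : ℕ, k < L ∧ w (z + k • u L) = 0) :
    ∑ b ∈ Finset.univ.filter (fun b => w b = 0),
        (((Finset.Icc 1 (L - 1)).filter
          (fun j => ∀ i : ℕ, 1 ≤ i → i ≤ j → Yv w (b - i • u L))).card)
      = (Finset.univ.filter (fun v => Yv w v)).card := by
  rw [← Finset.card_sigma]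
  have hinj : ∀ (b j b' j' : _), w b = 0 → w b' = 0 →
      (∀ i : ℕ, 1 ≤ i → i ≤ j' → Yv w (b' - i • u L)) → j ≤ j' →
      b - j • u L = b' - j' • u L → b = b' ∧ j = j' := by
    intro b j b' j' hb hb' hY' hjj' heq
    have hd : b = b' - (j' - j) • u L := by
      have h2 : b - j • u L + j • u L = b' - j' • u L + j • u L := by rw [heq]
      rw [sub_add_cancel, Q6 b' hjj'] at h2
      exact h2
    by_cases h0 : j' - j = 0
    · rw [h0, zero_nsmul, sub_zero] at hd
      exact ⟨hd, by omega⟩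
    · exfalso
      have hYd := (hY' (j' - j) (by omega) (by omega)).1
      rw [← hd, hb] at hYd
      exact absurd hYd (by decide)
  apply Finset.card_bij (fun (p : (_ : Pos L) × ℕ) _ => p.1 - p.2 • u L)
  · rintro ⟨b, j⟩ hp
    rw [Finset.mem_sigma] at hp
    obtain ⟨hb, hj⟩ := hp
    rw [Finset.mem_filter, Finset.mem_Icc] at hj
    simp only [Finset.mem_filter, Finset.mem_univ, true_and]
    exact hj.2 j hj.1.1 le_rfl
  · rintro ⟨b, j⟩ hp ⟨b', j'⟩ hp' heq
    rw [Finset.mem_sigma, Finset.mem_filter, Finset.mem_filter, Finset.mem_Icc] at hp hp'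
    simp only [Finset.mem_univ, true_and] at hp hp'
    rcases le_total j j' with hle | hle
    · obtain ⟨h1, h2⟩ := hinj b j b' j' hp.1 hp'.1 hp'.2.2 hle heq
      subst h1; subst h2; rfl
    · obtain ⟨h1, h2⟩ := hinj b' j' b j hp'.1 hp.1 hp.2.2 hle heq.symm
      subst h1; subst h2; rfl
  · intro v hv
    rw [Finset.mem_filter] at hv
    obtain ⟨-, hYv⟩ := hv
    have hTne : ((Finset.Icc 1 L).filter (fun k => ¬ Yv w (v + k • u L))).Nonempty := by
      obtain ⟨k₀, hk₀L, hk₀⟩ := hbead v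
      have hk₀0 : k₀ ≠ 0 := by
        intro h
        rw [h, Q5] at hk₀
        have h2 := hYv.1
        rw [hk₀] at h2
        exact absurd h2 (by decide)
      refine ⟨k₀, ?_⟩
      rw [Finset.mem_filter, Finset.mem_Icc]
      refine ⟨⟨by omega, by omega⟩, ?_⟩
      intro hY
      have h2 := hY.1
      rw [hk₀] at h2
      exact absurd h2 (by decide)
    set k₁ := (((Finset.Icc 1 L).filter (fun k => ¬ Yv w (v + k • u L)))).min' hTne with hk₁def
    have hk₁mem := Finset.min'_mem _ hTne
    rw [Finset.mem_filter, Finset.mem_Icc] at hk₁mem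
    obtain ⟨⟨hk₁1, hk₁L⟩, hk₁Y⟩ := hk₁mem
    have claimY : ∀ i : ℕ, i < k₁ → Yv w (v + i • u L) := by
      intro i hi
      rcases Nat.eq_zero_or_pos i with rfl | hi1
      · rw [Q5]; exact hYv
      · by_contra hc
        have : i ∈ (Finset.Icc 1 L).filter (fun k => ¬ Yv w (v + k • u L)) := by
          rw [Finset.mem_filter, Finset.mem_Icc]
          exact ⟨⟨by omega, by omega⟩, hc⟩
        have := Finset.min'_le _ i this
        omega
    have hYp : Yv w (v + (k₁ - 1) • u L) := claimY (k₁ - 1) (by omega)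
    have e : v + (k₁ - 1) • u L + u L = v + k₁ • u L := by
      rw [← Q1, show k₁ - 1 + 1 = k₁ from by omega]
    have claim0 : w (v + k₁ • u L) = 0 := by
      have h2 : w (v + k₁ • u L) ≠ 2 := by
        rw [← e]
        exact factY2 hBCu hYp
      have h1 : w (v + k₁ • u L) ≠ 1 := by
        intro h
        apply hk₁Y
        have := factY1 hBCe hYp (by rw [e]; exact h)
        rw [e] at this
        exact this
      rcases fin3 (w (v + k₁ • u L)) with h | h | h
      · exact h
      · exact absurd h h1
      · exact absurd h h2
    have hk₁L1 : k₁ ≤ L - 1 := by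
      rcases Nat.lt_or_ge k₁ L with h | h
      · omega
      · exfalso
        have : k₁ = L := by omega
        rw [this, Q7'] at claim0
        have h2 := hYv.1
        rw [claim0] at h2
        exact absurd h2 (by decide)
    refine ⟨⟨v + k₁ • u L, k₁⟩, ?_, ?_⟩
    · rw [Finset.mem_sigma, Finset.mem_filter, Finset.mem_filter, Finset.mem_Icc]
      refine ⟨⟨Finset.mem_univ _, claim0⟩, ⟨hk₁1, hk₁L1⟩, ?_⟩
      intro i hi1 hi2
      rw [Q6' v hi2]
      exact claimY (k₁ - i) (by omega)
    · show v + k₁ • u L - k₁ • u L = v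
      rw [Q6' v le_rfl, Nat.sub_self, Q5]

open scoped Classical in
private lemma XY_card (hL : 3 ≤ L) [NeZero L] (w : Pos L → Fin 3)
    (hBCe : BCE w) (hBCu : BCU w) :
    (Finset.univ.filter (fun v => Xv w v)).card
      = (Finset.univ.filter (fun v => Yv w v)).card := by
  have hX : Finset.univ.filter (fun v => Xv w v)
      = Finset.univ.filter (fun v : Pos L => w v = 2 ∧ ¬ w (v - (0, 1)) = 2) :=
    Finset.filter_congr fun v _ => factXB hBCe hBCu v
  have hY : Finset.univ.filter (fun v => Yv w v)
      = Finset.univ.filter (fun v : Pos L => w (v - (0, 1)) = 2 ∧ ¬ w v = 2) :=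
    Finset.filter_congr fun v _ => factYB hBCu v
  rw [hX, hY]
  have e1 : Finset.univ.filter (fun v : Pos L => w v = 2 ∧ ¬ w (v - (0, 1)) = 2)
      = (Finset.univ.filter (fun v : Pos L => w v = 2)).filter
          (fun v => ¬ w (v - (0, 1)) = 2) := by
    rw [Finset.filter_filter]
  have e3 : Finset.univ.filter (fun v : Pos L => w (v - (0, 1)) = 2 ∧ ¬ w v = 2)
      = (Finset.univ.filter (fun v : Pos L => w (v - (0, 1)) = 2)).filter
          (fun v => ¬ w v = 2) := by
    rw [Finset.filter_filter]
  rw [e1, e3]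
  have hA := Finset.card_filter_add_card_filter_not
    (s := Finset.univ.filter (fun v : Pos L => w v = 2))
    (p := fun v => w (v - (0, 1)) = 2)
  have hB := Finset.card_filter_add_card_filter_not
    (s := Finset.univ.filter (fun v : Pos L => w (v - (0, 1)) = 2))
    (p := fun v => w v = 2)
  have hmid : (Finset.univ.filter (fun v : Pos L => w v = 2)).filter
        (fun v => w (v - (0, 1)) = 2)
      = (Finset.univ.filter (fun v : Pos L => w (v - (0, 1)) = 2)).filter
        (fun v => w v = 2) := by
    rw [Finset.filter_filter, Finset.filter_filter]
    exact Finset.filter_congr fun v _ => and_comm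
  have htrans : (Finset.univ.filter (fun v : Pos L => w (v - (0, 1)) = 2)).card
      = (Finset.univ.filter (fun v : Pos L => w v = 2)).card := by
    apply Finset.card_bij (fun v _ => v - ((0 : ZMod L), (1 : ZMod L)))
    · intro a ha
      rw [Finset.mem_filter] at ha ⊢
      exact ⟨Finset.mem_univ _, ha.2⟩
    · intro a _ b _ h
      exact sub_left_inj.mp h
    · intro b hb
      rw [Finset.mem_filter] at hb
      refine ⟨b + (0, 1), ?_, add_sub_cancel_right _ _⟩
      rw [Finset.mem_filter]
      exact ⟨Finset.mem_univ _, by rw [add_sub_cancel_right]; exact hb.2⟩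
  rw [hmid] at hA
  omega
-- ## the frozen (bead-free) case

private lemma nsmul_01 [NeZero L] (m : ℕ) :
    m • ((0, 1) : Pos L) = ((0 : ZMod L), (m : ZMod L)) := by
  show m • ((0 : ZMod L), (1 : ZMod L)) = _
  rw [Prod.smul_mk]
  congr 1
  · rw [smul_zero]
  · rw [nsmul_eq_mul, mul_one]

private lemma J1 [NeZero L] (z : Pos L) (k : ℕ) :
    z + (0, 1) + k • u L - (0, 1) = z + k • u L := by
  rw [add_right_comm, add_sub_cancel_right]

private lemma J2 (hL : 3 ≤ L) [NeZero L] (z : Pos L) (k : ℕ) :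
    z + (0, 1) + k • u L - (1, 0) = z + (k + (L - 1)) • u L := by
  obtain ⟨a, b⟩ := z
  rw [nsmul_u, nsmul_u]
  simp only [Prod.mk_add_mk, Prod.mk_sub_mk, Prod.mk.injEq]
  constructor
  · rw [Nat.cast_add, Nat.cast_sub (by omega : 1 ≤ L), ZMod.natCast_self]
    ring
  · rw [Nat.cast_add, Nat.cast_sub (by omega : 1 ≤ L), ZMod.natCast_self]
    ring

private lemma col_prop (hL : 3 ≤ L) [NeZero L] (w : Pos L → Fin 3) (hBCu : BCU w)
    (z : Pos L) (hcol : ∀ k : ℕ, w (z + k • u L) ≠ 0) :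
    ∀ k : ℕ, w (z + (0, 1) + k • u L) ≠ 0 := by
  intro k h0
  have hw0 : w ((z + (0, 1) + k • u L) - dvec L 0) = 0 := by
    rw [dvec0, sub_zero]; exact h0
  have hq2 : w (z + k • u L) ≠ 2 := by
    intro h2
    have w2 : w ((z + (0, 1) + k • u L) - dvec L 2) = 2 := by
      rw [dvec2, J1]; exact h2
    exact absurd (hBCu _ 0 2 hw0 w2) (by decide)
  have wq : w (z + k • u L) = 1 := by
    rcases fin3 (w (z + k • u L)) with h | h | h
    · exact absurd h (hcol k)
    · exact h
    · exact absurd h hq2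
  have hq1' : w ((z + (0, 1) + k • u L) - (1, 0)) ≠ 1 := by
    intro h1
    have w1 : w ((z + (0, 1) + k • u L) - dvec L 1) = 1 := by
      rw [dvec1]; exact h1
    exact absurd (hBCu _ 0 1 hw0 w1) (by decide)
  have hq2' : w (z + (k + (L - 1)) • u L) = 2 := by
    have hne0 := hcol (k + (L - 1))
    have hne1 : w (z + (k + (L - 1)) • u L) ≠ 1 := by
      rw [← J2 hL]; exact hq1'
    rcases fin3 (w (z + (k + (L - 1)) • u L)) with h | h | h
    · exact absurd h hne0
    · exact absurd h hne1
    · exact h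
  have prop1 : ∀ q : Pos L, w q = 1 → w (q + u L) ≠ 2 := by
    intro q hq h2
    have w1 : w (q + (1, 0) - dvec L 1) = 1 := by
      rw [dvec1, add_sub_cancel_right]; exact hq
    have w2 : w (q + (1, 0) - dvec L 2) = 2 := by
      rw [dvec2, I6]; exact h2
    exact absurd (hBCu _ 1 2 w1 w2) (by decide)
  have chain : ∀ n : ℕ, w (z + (k + n) • u L) = 1 := by
    intro n
    induction n with
    | zero => rw [Nat.add_zero]; exact wq
    | succ n ih =>
      have e : z + (k + (n + 1)) • u L = z + (k + n) • u L + u L := by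
        rw [show k + (n + 1) = (k + n) + 1 from by omega, Q1]
      rw [e]
      have hne2 := prop1 _ ih
      have hne0 : w (z + (k + n) • u L + u L) ≠ 0 := by
        rw [← e]; exact hcol (k + (n + 1))
      rcases fin3 (w (z + (k + n) • u L + u L)) with h | h | h
      · exact absurd h hne0
      · exact h
      · exact absurd h hne2
  have hch := chain (L - 1)
  rw [hq2'] at hch
  exact absurd hch (by decide)

private lemma cover [NeZero L] (z v : Pos L) :
    ∃ m k : ℕ, v = z + m • ((0, 1) : Pos L) + k • u L := by
  refine ⟨((v - z).1 + (v - z).2).val, (v - z).1.val, ?_⟩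
  have hk : ((((v - z).1.val) : ℕ) : ZMod L) = (v - z).1 := by
    rw [ZMod.natCast_val, ZMod.cast_id]
  have hm : (((((v - z).1 + (v - z).2).val) : ℕ) : ZMod L) = (v - z).1 + (v - z).2 := by
    rw [ZMod.natCast_val, ZMod.cast_id]
  have key : ((((v - z).1 + (v - z).2).val) • ((0, 1) : Pos L)
      + ((v - z).1.val) • u L) = v - z := by
    rw [nsmul_01, nsmul_u, Prod.mk_add_mk, hk, hm]
    have : v - z = ((v - z).1, (v - z).2) := rfl
    rw [this]
    simp only [Prod.mk.injEq]
    constructor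
    · ring
    · ring
  rw [add_assoc, key, add_comm z (v - z), sub_add_cancel]

end BalanceProof

/-- For every perfect matching `σ` of the hexagonal torus `T_L`
(`L ≥ 3`), the total number of single-bead up-jumps available from `σ` equals the total
number of single-bead down-jumps available from `σ`:
`∑_beads |I⁺_b(σ)| = ∑_beads |I⁻_b(σ)|`. -/
theorem sum_Iplus_eq_sum_Iminus [NeZero L] (hL : 3 ≤ L)
    (σ : Config L) (hσ : IsPM L σ) :
    ∑ b ∈ beadPos L σ, (Iplus L σ b).ncard = ∑ b ∈ beadPos L σ, (Iminus L σ b).ncard := by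
  classical
  set w : Pos L → Fin 3 := fun x => (hσ.1 x).choose with hwdef
  have hwin : ∀ x : Pos L, (x, w x) ∈ σ := fun x => (hσ.1 x).choose_spec.1
  have hwu : ∀ x d, (x, d) ∈ σ → d = w x := fun x d hd => (hσ.1 x).choose_spec.2 d hd
  have hmem : ∀ p : Edge L, p ∈ σ ↔ w p.1 = p.2 := by
    intro p
    constructor
    · intro hp
      exact (hwu p.1 p.2 (by rwa [Prod.mk.eta])).symm
    · intro hp
      have h := hwin p.1
      rw [hp] at h
      rwa [Prod.mk.eta] at h
  have hBC : ∀ v : Pos L, ∃! d : Fin 3, w (v - dvec L d) = d := by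
    intro v
    obtain ⟨e, ⟨he, hev⟩, hu⟩ := hσ.2 v
    refine ⟨e.2, ?_, ?_⟩
    · have h1 : e.1 = v - dvec L e.2 := eq_sub_of_add_eq hev
      have h2 := (hmem e).mp he
      show w (v - dvec L e.2) = e.2
      rw [← h1]
      exact h2
    · intro d hd
      have hmemd : (v - dvec L d, d) ∈ σ := (hmem (v - dvec L d, d)).mpr hd
      have h2 := hu (v - dvec L d, d) ⟨hmemd, by rw [sub_add_cancel]⟩
      exact congrArg Prod.snd h2
  have hBCe : BCE w := fun v => (hBC v).exists
  have hBCu : BCU w := fun v d d' h h' => (hBC v).unique h h'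
  have hbp : beadPos L σ = Finset.univ.filter (fun b => w b = 0) := by
    ext b
    simp only [beadPos, Finset.mem_image, Finset.mem_filter, Finset.mem_univ, true_and]
    constructor
    · rintro ⟨e, ⟨he, he2⟩, he1⟩
      have h := (hmem e).mp he
      rw [he1, he2] at h
      exact h
    · intro hb
      exact ⟨(b, 0), ⟨(hmem (b, 0)).mpr hb, rfl⟩, rfl⟩
  by_cases hbead : ∀ z : Pos L, ∃ k : ℕ, k < L ∧ w (z + k • u L) = 0
  · rw [hbp]
    refine Eq.trans (Finset.sum_congr rfl fun b hb =>
      Iplus_ncard hL w hmem ((Finset.mem_filter.mp hb).2)) ?_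
    refine Eq.trans (count_up hL w hBCe hBCu hbead) ?_
    refine Eq.trans (XY_card hL w hBCe hBCu) ?_
    refine Eq.trans (count_down hL w hBCe hBCu hbead).symm ?_
    exact Finset.sum_congr rfl fun b hb =>
      (Iminus_ncard hL w hmem ((Finset.mem_filter.mp hb).2)).symm
  · push_neg at hbead
    obtain ⟨z, hz⟩ := hbead
    have hcol : ∀ k : ℕ, w (z + k • u L) ≠ 0 := by
      intro k hk
      have hmod : z + k • u L = z + (k % L) • u L := by
        conv_lhs => rw [show k = L * (k / L) + k % L from (Nat.div_add_mod k L).symm]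
        rw [add_nsmul, mul_comm L (k / L), mul_smul, P3, smul_zero, zero_add]
      exact hz (k % L) (Nat.mod_lt _ (by omega)) (by rw [← hmod]; exact hk)
    have hall : ∀ m k : ℕ, w (z + m • ((0, 1) : Pos L) + k • u L) ≠ 0 := by
      intro m
      induction m with
      | zero => intro k; rw [zero_nsmul, add_zero]; exact hcol k
      | succ m ih =>
        intro k
        have h := col_prop hL w hBCu (z + m • ((0, 1) : Pos L)) ih k
        rw [succ_nsmul, ← add_assoc]
        exact h
    have hnob : ∀ v : Pos L, w v ≠ 0 := by
      intro v
      obtain ⟨m, k, hv⟩ := cover z v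
      rw [hv]
      exact hall m k
    have hbe : beadPos L σ = ∅ := by
      rw [hbp, Finset.filter_eq_empty_iff]
      intro b _
      exact hnob b
    rw [hbe]
    simp

end HexDimer
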